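/- If P_X has no atoms and there exists a Borel set A⊂ℝ with Leb(A)=0 and P_X(A)>0, then P_X is singular with respect to Lebesgue measure: there is a Borel set B⊇A with Leb(B)=0 and P_X(B)=1. -/

import Mathlib

open MeasureTheory Filter Topology

/-- The affine permutation `y ↦ p.1 + p.2 * y` of `ℝ` (identity if `p.2 = 0`). -/
noncomputable def affPerm (p : ℝ × ℝ) : Equiv.Perm ℝ :=
  if h : p.2 ≠ 0 then
    { toFun := fun y => p.1 + p.2 * y
      invFun := fun y => (y - p.1) / p.2
      left_inv := fun y => by field_simp; ring
      right_inv := fun y => by field_simp; ring }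
  else 1

lemma affPerm_apply (p : ℝ × ℝ) (h : p.2 ≠ 0) (y : ℝ) :
    affPerm p y = p.1 + p.2 * y := by
  simp [affPerm, h, Equiv.coe_fn_mk]

lemma affPerm_symm_apply (p : ℝ × ℝ) (h : p.2 ≠ 0) (y : ℝ) :
    (affPerm p)⁻¹ y = (y - p.1) / p.2 := by
  simp only [affPerm, dif_pos h]
  rfl

/-- a predicate saying that a permutation of `ℝ` is affine with nonzero slope -/
def IsAff (g : Equiv.Perm ℝ) : Prop := ∃ s c : ℝ, s ≠ 0 ∧ ∀ y, g y = s * y + c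

lemma isAff_one : IsAff 1 := ⟨1, 0, one_ne_zero, fun y => by simp⟩

lemma isAff_mul {g h : Equiv.Perm ℝ} (hg : IsAff g) (hh : IsAff h) : IsAff (g * h) := by
  obtain ⟨s, c, hs, hgs⟩ := hg
  obtain ⟨t, d, ht, hht⟩ := hh
  exact ⟨s * t, s * d + c, mul_ne_zero hs ht, fun y => by
    simp [Equiv.Perm.mul_apply, hgs, hht]; ring⟩

lemma isAff_affPerm (p : ℝ × ℝ) (h : p.2 ≠ 0) : IsAff (affPerm p) :=
  ⟨p.2, p.1, h, fun y => by rw [affPerm_apply p h]; ring⟩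

lemma isAff_affPerm_inv (p : ℝ × ℝ) (h : p.2 ≠ 0) : IsAff (affPerm p)⁻¹ :=
  ⟨p.2⁻¹, -(p.1 / p.2), inv_ne_zero h, fun y => by
    rw [affPerm_symm_apply p h]; field_simp; ring⟩

/-- affine image of a set as a preimage -/
lemma aff_image_eq_preimage (s c : ℝ) (hs : s ≠ 0) (A : Set ℝ) :
    (fun y => s * y + c) '' A = (fun y => (y - c) / s) ⁻¹' A := by
  ext y
  constructor
  · rintro ⟨x, hx, rfl⟩
    show (s * x + c - c) / s ∈ A
    have h : (s * x + c - c) / s = x := by field_simp; ring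
    rw [h]; exact hx
  · intro hy
    exact ⟨(y - c) / s, hy, by field_simp; ring⟩

lemma aff_preimage_null {s c : ℝ} (hs : s ≠ 0) {A : Set ℝ} (hA : volume A = 0) :
    volume ((fun y => (y - c) / s) ⁻¹' A) = 0 := by
  have hfun : (fun y : ℝ => (y - c) / s) = (fun y : ℝ => s⁻¹ * y) ∘ (fun y : ℝ => y + (-c)) := by
    funext y; show (y - c) / s = s⁻¹ * (y + -c); field_simp; ring
  rw [hfun, Set.preimage_comp]
  rw [measure_preimage_add_right]
  rw [Real.volume_preimage_mul_left (inv_ne_zero hs), hA, mul_zero]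

lemma isAff_image_measurable {g : Equiv.Perm ℝ} (hg : IsAff g) {A : Set ℝ}
    (hA : MeasurableSet A) : MeasurableSet (⇑g '' A) := by
  obtain ⟨s, c, hs, hgs⟩ := hg
  have hco : ⇑g = fun y => s * y + c := funext hgs
  rw [hco, aff_image_eq_preimage s c hs A]
  exact ((measurable_id.sub_const c).div_const s) hA

lemma isAff_image_null {g : Equiv.Perm ℝ} (hg : IsAff g) {A : Set ℝ}
    (hA : volume A = 0) : volume (⇑g '' A) = 0 := by
  obtain ⟨s, c, hs, hgs⟩ := hg
  have hco : ⇑g = fun y => s * y + c := funext hgs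
  rw [hco, aff_image_eq_preimage s c hs A]
  exact aff_preimage_null hs hA

/-- If the law `P_X` has no atoms and charges some Lebesgue-null Borel set `A`, then it is
singular with respect to Lebesgue measure: there is a Borel set `B ⊇ A` of Lebesgue measure
zero with `P_X(B) = 1`. -/
theorem continuous_charging_null_set_implies_singular
    {Ω : Type*} [MeasurableSpace Ω] (P : Measure Ω) [IsProbabilityMeasure P]
    (T : Ω → Ω) (hT : Ergodic T P)
    (b r : Ω → ℝ) (hb : Measurable b) (hr : Measurable r)
    (hrpos : ∀ ω, 0 < r ω)
    (hbInt : Integrable b P)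
    (hlogInt : Integrable (fun ω => Real.log (r ω)) P)
    (hlogNeg : ∫ ω, Real.log (r ω) ∂P < 0)
    (hScount : Set.Countable {p : ℝ × ℝ | ∃ ω, (b ω, r ω) = p})
    (hSpos : ∀ p ∈ {p : ℝ × ℝ | ∃ ω, (b ω, r ω) = p}, 0 < P {ω | (b ω, r ω) = p})
    (X : Ω → ℝ) (hX : Measurable X)
    (hXsum : ∀ᵐ ω ∂P,
      HasSum (fun n : ℕ => (∏ k ∈ Finset.range n, r (T^[k] ω)) * b (T^[n] ω)) (X ω))
    (hcont : ∀ a : ℝ, P.map X {a} = 0)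
    (A : Set ℝ) (hA : MeasurableSet A) (hAnull : volume A = 0) (hApos : 0 < P.map X A) :
    (∃ B : Set ℝ, MeasurableSet B ∧ A ⊆ B ∧ volume B = 0 ∧ P.map X B = 1)
    ∧ P.map X ⟂ₘ volume := by
  classical
  -- The recursion X ω = b ω + r ω * X (T ω) a.e.
  have hrec : ∀ᵐ ω ∂P, X ω = b ω + r ω * X (T ω) := by
    have h2 : ∀ᵐ ω ∂P,
        HasSum (fun n : ℕ => (∏ k ∈ Finset.range n, r (T^[k] (T ω))) * b (T^[n] (T ω)))
          (X (T ω)) :=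
      hT.toMeasurePreserving.quasiMeasurePreserving.ae hXsum
    filter_upwards [hXsum, h2] with ω h1 h2
    have key : (fun n : ℕ => (∏ k ∈ Finset.range (n + 1), r (T^[k] ω)) * b (T^[n + 1] ω))
        = fun n : ℕ => r ω * ((∏ k ∈ Finset.range n, r (T^[k] (T ω))) * b (T^[n] (T ω))) := by
      funext n
      rw [Finset.prod_range_succ']
      simp only [Function.iterate_succ_apply, Function.iterate_zero_apply]
      ring
    have h3 := (hasSum_nat_add_iff' 1).2 h1
    rw [key] at h3
    have h4 := h2.mul_left (r ω)
    have h5 := h3.unique h4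
    have h6 : ∑ i ∈ Finset.range 1,
        (∏ k ∈ Finset.range i, r (T^[k] ω)) * b (T^[i] ω) = b ω := by simp
    rw [h6] at h5
    linarith
  -- The countable set of affine maps and the group elements generated as products
  set Sset : Set (ℝ × ℝ) := {p : ℝ × ℝ | ∃ ω, (b ω, r ω) = p} with hSset
  set S' : Set (Equiv.Perm ℝ) :=
    (affPerm '' Sset) ∪ ((fun g => g⁻¹) '' (affPerm '' Sset)) with hS'
  have hS'count : S'.Countable :=
    (hScount.image _).union ((hScount.image _).image _)
  set H : Set (Equiv.Perm ℝ) :=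
    {g | ∃ l : List (Equiv.Perm ℝ), (∀ y ∈ l, y ∈ S') ∧ l.prod = g} with hH
  have hHcount : H.Countable := by
    have hlist : {l : List (Equiv.Perm ℝ) | ∀ y ∈ l, y ∈ S'}.Countable := by
      have : {l : List (Equiv.Perm ℝ) | ∀ y ∈ l, y ∈ S'}
          ⊆ Set.range (List.map (Subtype.val : S' → Equiv.Perm ℝ)) := by
        intro l hl
        refine ⟨l.attach.map (fun x => ⟨x.1, hl x.1 x.2⟩), ?_⟩
        simp [List.map_map, Function.comp]
      have : Countable S' := hS'count.to_subtype
      exact Set.Countable.mono ‹_› (Set.countable_range _)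
    have : H ⊆ List.prod '' {l : List (Equiv.Perm ℝ) | ∀ y ∈ l, y ∈ S'} := by
      rintro g ⟨l, hl, rfl⟩
      exact ⟨l, hl, rfl⟩
    exact (hlist.image _).mono this
  -- slope positivity at members of Sset
  have hSslope : ∀ p ∈ Sset, p.2 ≠ 0 := by
    rintro p ⟨ω, rfl⟩
    exact ne_of_gt (hrpos ω)
  -- every element of S' and of H is affine
  have hS'aff : ∀ g ∈ S', IsAff g := by
    rintro g (⟨p, hp, rfl⟩ | ⟨g', ⟨p, hp, rfl⟩, rfl⟩)
    · exact isAff_affPerm p (hSslope p hp)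
    · exact isAff_affPerm_inv p (hSslope p hp)
  have hHaff : ∀ g ∈ H, IsAff g := by
    rintro g ⟨l, hl, rfl⟩
    induction l with
    | nil => simpa using isAff_one
    | cons a t ih =>
      rw [List.prod_cons]
      exact isAff_mul (hS'aff a (hl a List.mem_cons_self))
        (ih (fun y hy => hl y (List.mem_cons_of_mem a hy)))
  have hone : (1 : Equiv.Perm ℝ) ∈ H := ⟨[], by simp, by simp⟩
  -- The set B
  set B : Set ℝ := ⋃ g ∈ H, ⇑g '' A with hBdef
  have hBmeas : MeasurableSet B :=
    MeasurableSet.biUnion hHcount (fun g hg => isAff_image_measurable (hHaff g hg) hA)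
  have hBnull : volume B = 0 :=
    (measure_biUnion_null_iff hHcount).2 (fun g hg => isAff_image_null (hHaff g hg) hAnull)
  have hAB : A ⊆ B := by
    intro x hx
    exact Set.mem_biUnion hone (by simpa using hx)
  -- invariance of E = X ⁻¹' B
  set E : Set Ω := X ⁻¹' B with hEdef
  have hEinv : T ⁻¹' E =ᵐ[P] E := by
    rw [Filter.eventuallyEq_set]
    filter_upwards [hrec] with ω hω
    have hrne : r ω ≠ 0 := ne_of_gt (hrpos ω)
    set φ := affPerm (b ω, r ω) with hφdef
    have hpS : ((b ω, r ω) : ℝ × ℝ) ∈ Sset := ⟨ω, rfl⟩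
    have hφS' : φ ∈ S' := Or.inl ⟨(b ω, r ω), hpS, rfl⟩
    have hφiS' : φ⁻¹ ∈ S' := Or.inr ⟨φ, ⟨(b ω, r ω), hpS, rfl⟩, rfl⟩
    have hφX : φ (X (T ω)) = X ω := by
      rw [hφdef, affPerm_apply _ hrne]
      exact hω.symm
    constructor
    · intro hTω
      have hTω' : X (T ω) ∈ B := hTω
      obtain ⟨g, hgH, x, hx, hgx⟩ := Set.mem_iUnion₂.1 hTω'
      obtain ⟨l, hl, rfl⟩ := hgH
      show X ω ∈ B
      have hmemH : φ * l.prod ∈ H := by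
        refine ⟨φ :: l, ?_, by simp⟩
        intro y hy
        rcases List.mem_cons.1 hy with rfl | hy
        · exact hφS'
        · exact hl y hy
      refine Set.mem_biUnion hmemH ⟨x, hx, ?_⟩
      rw [Equiv.Perm.mul_apply, hgx, hφX]
    · intro hω'
      have hω'' : X ω ∈ B := hω'
      obtain ⟨g, hgH, x, hx, hgx⟩ := Set.mem_iUnion₂.1 hω''
      obtain ⟨l, hl, rfl⟩ := hgH
      show X (T ω) ∈ B
      have hmemH : φ⁻¹ * l.prod ∈ H := by
        refine ⟨φ⁻¹ :: l, ?_, by simp⟩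
        intro y hy
        rcases List.mem_cons.1 hy with rfl | hy
        · exact hφiS'
        · exact hl y hy
      refine Set.mem_biUnion hmemH ⟨x, hx, ?_⟩
      rw [Equiv.Perm.mul_apply, hgx, ← hφX, Equiv.Perm.inv_def, Equiv.symm_apply_apply]
  -- ergodicity: P E is 0 or 1
  have hmap : P.map X B = P E := Measure.map_apply hX hBmeas
  have h01 := hT.quasiErgodic.ae_empty_or_univ₀ (hX hBmeas).nullMeasurableSet hEinv
  have hPE : P E = 1 := by
    rcases h01 with h | h
    · exfalso
      have : P E = 0 := by
        have := measure_congr h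
        simpa using this
      have hApos' : 0 < P E := by
        rw [← hmap] at *
        calc (0 : ENNReal) < P.map X A := hApos
          _ ≤ P.map X B := measure_mono hAB
      rw [this] at hApos'
      exact lt_irrefl 0 hApos'
    · have := measure_congr h
      simpa using this
  have hmapB : P.map X B = 1 := by rw [hmap, hPE]
  have : IsProbabilityMeasure (P.map X) := Measure.isProbabilityMeasure_map hX.aemeasurable
  refine ⟨⟨B, hBmeas, hAB, hBnull, hmapB⟩, ⟨Bᶜ, hBmeas.compl, ?_, ?_⟩⟩
  · rw [measure_compl hBmeas (measure_ne_top _ _), hmapB, measure_univ, tsub_self]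
  · rw [compl_compl]
    exact hBnull
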